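/- arXiv:2603.00580 — 4 statements merged into one kernel-verified Lean document; each statement's English description precedes it below -/
import Mathlib

section
/- Let F⁻¹ : (0,1) → ℝ be a nondecreasing integrable quantile function and α ∈ (0,1). Among all bounded measurable weight functions w : [0,1] → [0, 1/(1−α)] with ∫₀¹ w(u) du = 1, the weighted integral ∫₀¹ F⁻¹(u) w(u) du is maximized by w(u) = 1{u ∈ (α,1]}/(1−α) and minimized by w(u) = 1{u ∈ [0,1−α]}/(1−α). In particular, for any such w, (1/(1−α)) ∫₀^{1−α} F⁻¹(u) du ≤ ∫₀¹ F⁻¹(u) w(u) du ≤ (1/(1−α)) ∫_α¹ F⁻¹(u) du. -/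
open MeasureTheory Set

private lemma aux_nonpos (f g : ℝ → ℝ) (c : ℝ)
    (hfg : IntervalIntegrable (fun u => f u * g u) volume 0 1)
    (hg : IntervalIntegrable g volume 0 1)
    (hg0 : (∫ u in (0:ℝ)..1, g u) = 0)
    (hle : ∀ u ∈ Set.Ioo (0:ℝ) 1, (f u - c) * g u ≤ 0) :
    (∫ u in (0:ℝ)..1, f u * g u) ≤ 0 := by
  have key : (∫ u in (0:ℝ)..1, (f u - c) * g u) ≤ 0 := by
    rw [intervalIntegral.integral_of_le zero_le_one,
        MeasureTheory.integral_Ioc_eq_integral_Ioo]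
    exact setIntegral_nonpos measurableSet_Ioo hle
  have heq : (∫ u in (0:ℝ)..1, (f u - c) * g u)
      = (∫ u in (0:ℝ)..1, f u * g u) - c * ∫ u in (0:ℝ)..1, g u := by
    have h1 : ∀ u, (f u - c) * g u = f u * g u - c * g u := fun u => by ring
    simp_rw [h1]
    rw [intervalIntegral.integral_sub hfg (hg.const_mul c),
        intervalIntegral.integral_const_mul]
  rw [heq, hg0] at key
  linarith

/-- Among bounded measurable weights `w : [0,1] → [0, 1/(1−α)]` with `∫₀¹ w = 1`, the weighted
integral `∫₀¹ F⁻¹ w` of a nondecreasing integrable quantile function `F⁻¹` is maximized by the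
weight `1{(α,1]}/(1−α)` and minimized by `1{[0,1−α]}/(1−α)`; in particular it lies between
`(1/(1−α)) ∫₀^{1−α} F⁻¹` and `(1/(1−α)) ∫_α¹ F⁻¹`. -/
theorem stmt_7 (α : ℝ) (hα : α ∈ Set.Ioo (0 : ℝ) 1)
    (Finv : ℝ → ℝ) (hmono : MonotoneOn Finv (Set.Ioo 0 1))
    (hFi : IntervalIntegrable Finv volume 0 1)
    (w : ℝ → ℝ) (hwm : Measurable w)
    (hwb : ∀ u ∈ Set.Icc (0 : ℝ) 1, w u ∈ Set.Icc (0 : ℝ) (1 - α)⁻¹)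
    (hw1 : (∫ u in (0 : ℝ)..1, w u) = 1)
    (hprod : IntervalIntegrable (fun u => Finv u * w u) volume 0 1) :
    ((1 - α)⁻¹ * (∫ u in (0 : ℝ)..(1 - α), Finv u) ≤ ∫ u in (0 : ℝ)..1, Finv u * w u) ∧
      ((∫ u in (0 : ℝ)..1, Finv u * w u) ≤ (1 - α)⁻¹ * (∫ u in α..(1 : ℝ), Finv u)) ∧
      ((∫ u in (0 : ℝ)..1,
          Finv u * Set.indicator (Set.Ioc α 1) (fun _ => (1 - α)⁻¹) u)
        = (1 - α)⁻¹ * (∫ u in α..(1 : ℝ), Finv u)) ∧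
      ((∫ u in (0 : ℝ)..1,
          Finv u * Set.indicator (Set.Icc 0 (1 - α)) (fun _ => (1 - α)⁻¹) u)
        = (1 - α)⁻¹ * (∫ u in (0 : ℝ)..(1 - α), Finv u)) := by
  obtain ⟨hα0, hα1⟩ := hα
  set M : ℝ := (1 - α)⁻¹ with hM
  have h1α : (0:ℝ) < 1 - α := by linarith
  have hMpos : 0 < M := inv_pos.2 h1α
  have hα1' : α ≤ 1 := le_of_lt hα1
  -- the two indicator weights
  set h : ℝ → ℝ := Set.indicator (Set.Ioc α 1) (fun _ => M) with hh
  set h' : ℝ → ℝ := Set.indicator (Set.Icc 0 (1 - α)) (fun _ => M) with hh'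
  -- integrability of Finv on subintervals
  have hFIoc : IntegrableOn Finv (Set.Ioc 0 1) volume := by
    rwa [intervalIntegrable_iff_integrableOn_Ioc_of_le zero_le_one] at hFi
  have hFα : IntegrableOn Finv (Set.Ioc α 1) volume :=
    hFIoc.mono_set (Set.Ioc_subset_Ioc_left (le_of_lt hα0))
  have hF1α : IntegrableOn Finv (Set.Ioc 0 (1 - α)) volume :=
    hFIoc.mono_set (Set.Ioc_subset_Ioc_right (by linarith))
  -- pointwise forms of Finv * indicator
  have hfh : ∀ u, Finv u * h u = Set.indicator (Set.Ioc α 1) (fun u => Finv u * M) u := by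
    intro u
    by_cases hu : u ∈ Set.Ioc α 1 <;>
      simp [hh, Set.indicator_of_mem, Set.indicator_of_notMem, hu]
  have hfh' : ∀ u, Finv u * h' u = Set.indicator (Set.Icc 0 (1 - α)) (fun u => Finv u * M) u := by
    intro u
    by_cases hu : u ∈ Set.Icc (0:ℝ) (1 - α) <;>
      simp [hh', Set.indicator_of_mem, Set.indicator_of_notMem, hu]
  -- equality 1: ∫ Finv * h = M * ∫_α^1 Finv
  have eq1 : (∫ u in (0:ℝ)..1, Finv u * h u) = M * ∫ u in α..(1:ℝ), Finv u := by
    simp_rw [hfh]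
    rw [intervalIntegral.integral_of_le zero_le_one,
        setIntegral_indicator measurableSet_Ioc,
        Set.inter_eq_self_of_subset_right (Set.Ioc_subset_Ioc_left (le_of_lt hα0)),
        intervalIntegral.integral_of_le hα1']
    rw [← integral_const_mul]
    congr 1; funext u; ring
  -- equality 2: ∫ Finv * h' = M * ∫_0^{1-α} Finv
  have eq2 : (∫ u in (0:ℝ)..1, Finv u * h' u) = M * ∫ u in (0:ℝ)..(1 - α), Finv u := by
    simp_rw [hfh']
    rw [intervalIntegral.integral_of_le zero_le_one,
        setIntegral_indicator measurableSet_Icc]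
    have hint : Set.Ioc (0:ℝ) 1 ∩ Set.Icc 0 (1 - α) = Set.Ioc 0 (1 - α) := by
      ext u
      simp only [Set.mem_inter_iff, Set.mem_Ioc, Set.mem_Icc]
      constructor
      · rintro ⟨⟨hu0, _⟩, ⟨_, hu2⟩⟩; exact ⟨hu0, hu2⟩
      · rintro ⟨hu0, hu2⟩; exact ⟨⟨hu0, by linarith⟩, ⟨le_of_lt hu0, hu2⟩⟩
    rw [hint, intervalIntegral.integral_of_le (le_of_lt h1α), ← integral_const_mul]
    congr 1; funext u; ring
  -- integrability of Finv * h, Finv * h'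
  have hFh : IntervalIntegrable (fun u => Finv u * h u) volume 0 1 := by
    rw [intervalIntegrable_iff_integrableOn_Ioc_of_le zero_le_one]
    have : IntegrableOn (Set.indicator (Set.Ioc α 1) (fun u => Finv u * M)) (Set.Ioc 0 1) volume :=
      ((integrable_indicator_iff measurableSet_Ioc).2 (hFα.mul_const M)).integrableOn
    exact this.congr_fun (fun u _ => (hfh u).symm) measurableSet_Ioc
  have hFh' : IntervalIntegrable (fun u => Finv u * h' u) volume 0 1 := by
    rw [intervalIntegrable_iff_integrableOn_Ioc_of_le zero_le_one]
    have : IntegrableOn (Set.indicator (Set.Icc 0 (1 - α)) (fun u => Finv u * M)) (Set.Ioc 0 1) volume := by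
      have hF' : IntegrableOn Finv (Set.Icc 0 (1 - α)) volume := by
        rw [integrableOn_Icc_iff_integrableOn_Ioc]
        exact hF1α
      exact ((integrable_indicator_iff measurableSet_Icc).2 (hF'.mul_const M)).integrableOn
    exact this.congr_fun (fun u _ => (hfh' u).symm) measurableSet_Ioc
  -- integrability of w, h, h'
  have hwint : IntervalIntegrable w volume 0 1 := by
    rw [intervalIntegrable_iff_integrableOn_Ioc_of_le zero_le_one]
    apply Integrable.mono' (integrableOn_const (C := M) measure_Ioc_lt_top.ne) hwm.aestronglyMeasurable
    filter_upwards [ae_restrict_mem measurableSet_Ioc] with u hu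
    have := hwb u (Set.Ioc_subset_Icc_self hu)
    rw [Real.norm_eq_abs, abs_of_nonneg this.1]; exact this.2
  have hhint : IntervalIntegrable h volume 0 1 := by
    rw [intervalIntegrable_iff_integrableOn_Ioc_of_le zero_le_one]
    exact ((integrable_indicator_iff measurableSet_Ioc).2
      (integrableOn_const measure_Ioc_lt_top.ne)).integrableOn
  have hh'int : IntervalIntegrable h' volume 0 1 := by
    rw [intervalIntegrable_iff_integrableOn_Ioc_of_le zero_le_one]
    exact ((integrable_indicator_iff measurableSet_Icc).2
      (integrableOn_const measure_Icc_lt_top.ne)).integrableOn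
  -- ∫ h = 1 and ∫ h' = 1
  have hint1 : (∫ u in (0:ℝ)..1, h u) = 1 := by
    rw [intervalIntegral.integral_of_le zero_le_one, hh,
        setIntegral_indicator measurableSet_Ioc,
        Set.inter_eq_self_of_subset_right (Set.Ioc_subset_Ioc_left (le_of_lt hα0)),
        setIntegral_const, Real.volume_real_Ioc_of_le hα1',
        smul_eq_mul]
    rw [hM]
    exact mul_inv_cancel₀ h1α.ne'
  have hint2 : (∫ u in (0:ℝ)..1, h' u) = 1 := by
    rw [intervalIntegral.integral_of_le zero_le_one, hh',
        setIntegral_indicator measurableSet_Icc]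
    have hint : Set.Ioc (0:ℝ) 1 ∩ Set.Icc 0 (1 - α) = Set.Ioc 0 (1 - α) := by
      ext u
      simp only [Set.mem_inter_iff, Set.mem_Ioc, Set.mem_Icc]
      constructor
      · rintro ⟨⟨hu0, _⟩, ⟨_, hu2⟩⟩; exact ⟨hu0, hu2⟩
      · rintro ⟨hu0, hu2⟩; exact ⟨⟨hu0, by linarith⟩, ⟨le_of_lt hu0, hu2⟩⟩
    rw [hint, setIntegral_const, Real.volume_real_Ioc_of_le (by linarith),
        smul_eq_mul, sub_zero]
    rw [hM]
    exact mul_inv_cancel₀ h1α.ne'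
  -- upper bound
  have hub : (∫ u in (0:ℝ)..1, Finv u * w u) ≤ M * ∫ u in α..(1:ℝ), Finv u := by
    have key : (∫ u in (0:ℝ)..1, Finv u * (w u - h u)) ≤ 0 := by
      apply aux_nonpos Finv (fun u => w u - h u) (Finv α)
      · have hfun : (fun u => Finv u * (w u - h u))
            = fun u => Finv u * w u - Finv u * h u := by funext u; ring
        rw [hfun]; exact hprod.sub hFh
      · exact hwint.sub hhint
      · rw [intervalIntegral.integral_sub hwint hhint, hw1, hint1]; ring
      · intro u hu
        rcases le_or_gt u α with huα | huα
        · have hg0 : 0 ≤ w u - h u := by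
            have : h u = 0 := by
              rw [hh]
              exact Set.indicator_of_notMem (fun hmem => absurd hmem.1 (not_lt.2 huα)) _
            rw [this, sub_zero]
            exact (hwb u ⟨le_of_lt hu.1, le_of_lt hu.2⟩).1
          have hf0 : Finv u - Finv α ≤ 0 := by
            have := hmono hu ⟨hα0, hα1⟩ huα
            linarith
          exact mul_nonpos_of_nonpos_of_nonneg hf0 hg0
        · have hg0 : w u - h u ≤ 0 := by
            have : h u = M := by
              rw [hh]
              exact Set.indicator_of_mem (Set.mem_Ioc.2 ⟨huα, le_of_lt hu.2⟩) _
            rw [this]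
            have := (hwb u ⟨le_of_lt hu.1, le_of_lt hu.2⟩).2
            linarith
          have hf0 : 0 ≤ Finv u - Finv α := by
            have := hmono ⟨hα0, hα1⟩ hu (le_of_lt huα)
            linarith
          exact mul_nonpos_of_nonneg_of_nonpos hf0 hg0
    have := intervalIntegral.integral_sub hprod hFh
    have hsplit : (∫ u in (0:ℝ)..1, Finv u * (w u - h u))
        = (∫ u in (0:ℝ)..1, Finv u * w u) - ∫ u in (0:ℝ)..1, Finv u * h u := by
      rw [← intervalIntegral.integral_sub hprod hFh]
      congr 1; funext u; ring
    rw [hsplit, eq1] at key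
    linarith
  -- lower bound
  have hlb : M * (∫ u in (0:ℝ)..(1 - α), Finv u) ≤ ∫ u in (0:ℝ)..1, Finv u * w u := by
    have key : (∫ u in (0:ℝ)..1, Finv u * (h' u - w u)) ≤ 0 := by
      apply aux_nonpos Finv (fun u => h' u - w u) (Finv (1 - α))
      · have hfun : (fun u => Finv u * (h' u - w u))
            = fun u => Finv u * h' u - Finv u * w u := by funext u; ring
        rw [hfun]; exact hFh'.sub hprod
      · exact hh'int.sub hwint
      · rw [intervalIntegral.integral_sub hh'int hwint, hw1, hint2]; ring
      · intro u hu
        rcases le_or_gt u (1 - α) with huα | huα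
        · have hg0 : 0 ≤ h' u - w u := by
            have : h' u = M := by
              rw [hh']
              exact Set.indicator_of_mem (Set.mem_Icc.2 ⟨le_of_lt hu.1, huα⟩) _
            rw [this]
            have := (hwb u ⟨le_of_lt hu.1, le_of_lt hu.2⟩).2
            linarith
          have hf0 : Finv u - Finv (1 - α) ≤ 0 := by
            have := hmono hu ⟨h1α, by linarith⟩ huα
            linarith
          exact mul_nonpos_of_nonpos_of_nonneg hf0 hg0
        · have hg0 : h' u - w u ≤ 0 := by
            have : h' u = 0 := by
              rw [hh']
              exact Set.indicator_of_notMem (fun hmem => absurd hmem.2 (not_le.2 huα)) _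
            rw [this]
            have := (hwb u ⟨le_of_lt hu.1, le_of_lt hu.2⟩).1
            linarith
          have hf0 : 0 ≤ Finv u - Finv (1 - α) := by
            have := hmono ⟨h1α, by linarith⟩ hu (le_of_lt huα)
            linarith
          exact mul_nonpos_of_nonneg_of_nonpos hf0 hg0
    have hsplit : (∫ u in (0:ℝ)..1, Finv u * (h' u - w u))
        = (∫ u in (0:ℝ)..1, Finv u * h' u) - ∫ u in (0:ℝ)..1, Finv u * w u := by
      rw [← intervalIntegral.integral_sub hFh' hprod]
      congr 1; funext u; ring
    rw [hsplit, eq2] at key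
    linarith
  exact ⟨hlb, hub, eq1, eq2⟩
end

section
/- Let C₁ and C₂ be bivariate copulas with C₁ ≤ C₂ pointwise on [0,1]² (concordance order), and let F⁻¹ : (0,1) → ℝ be a nondecreasing bounded quantile function. Fix α ∈ (0,1) and suppose the conditional distributions Cⱼ(α|u) := ∂Cⱼ(u,α)/∂u exist for a.e. u. Then ∫₀¹ F⁻¹(u) (1 − C₁(α|u))/(1−α) du ≤ ∫₀¹ F⁻¹(u) (1 − C₂(α|u))/(1−α) du. -/
open MeasureTheory Set

/-- A bivariate copula on `[0,1]²`: grounded, with uniform margins, and 2-increasing. -/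
structure Copula where
  toFun : ℝ → ℝ → ℝ
  grounded_left : ∀ v ∈ Set.Icc (0 : ℝ) 1, toFun 0 v = 0
  grounded_bot : ∀ u ∈ Set.Icc (0 : ℝ) 1, toFun u 0 = 0
  margin_left : ∀ v ∈ Set.Icc (0 : ℝ) 1, toFun 1 v = v
  margin_right : ∀ u ∈ Set.Icc (0 : ℝ) 1, toFun u 1 = u
  two_increasing : ∀ u₁ ∈ Set.Icc (0 : ℝ) 1, ∀ u₂ ∈ Set.Icc (0 : ℝ) 1,
    ∀ v₁ ∈ Set.Icc (0 : ℝ) 1, ∀ v₂ ∈ Set.Icc (0 : ℝ) 1, u₁ ≤ u₂ → v₁ ≤ v₂ →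
      0 ≤ toFun u₂ v₂ - toFun u₁ v₂ - toFun u₂ v₁ + toFun u₁ v₁

lemma aux_step_nonneg (g : ℝ → ℝ) (hgint : IntervalIntegrable g volume 0 1)
    (hgb : ∀ u ∈ Icc (0:ℝ) 1, |g u| ≤ 1)
    (hG : ∀ t ∈ Icc (0:ℝ) 1, (∫ u in (0:ℝ)..t, g u) ≤ 0)
    (hG1 : (∫ u in (0:ℝ)..1, g u) = 0)
    (f : ℝ → ℝ) (hmono : MonotoneOn f (Ioo 0 1))
    (M : ℝ) (hbdd : ∀ u ∈ Ioo (0:ℝ) 1, |f u| ≤ M)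
    (hfg : IntervalIntegrable (fun u => f u * g u) volume 0 1) :
    0 ≤ ∫ u in (0:ℝ)..1, f u * g u := by
  set I := ∫ u in (0:ℝ)..1, f u * g u with hI
  have hM : 0 ≤ M := le_trans (abs_nonneg _) (hbdd (1/2) (by norm_num))
  have key : ∀ n : ℕ, 2 ≤ n → -((6*M)/n) ≤ I := by
    intro n hn2
    have hNpos : (0:ℝ) < n := by positivity
    set t : ℕ → ℝ := fun k => (k : ℝ) / n with ht
    have ht0 : t 0 = 0 := by simp [ht]
    have htn : t n = 1 := by simp only [ht]; exact div_self (ne_of_gt hNpos)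
    have htmono : ∀ {i j : ℕ}, i ≤ j → t i ≤ t j := by
      intro i j hij
      have hcast : (i:ℝ) ≤ (j:ℝ) := by exact_mod_cast hij
      simp only [ht]
      gcongr
    have htIcc : ∀ {k : ℕ}, k ≤ n → t k ∈ Icc (0:ℝ) 1 := by
      intro k hk
      exact ⟨by positivity, by rw [← htn]; exact htmono hk⟩
    have htIoo : ∀ {k : ℕ}, 1 ≤ k → k ≤ n - 1 → t k ∈ Ioo (0:ℝ) 1 := by
      intro k h1 h2
      constructor
      · have : (1:ℝ) ≤ (k:ℝ) := by exact_mod_cast h1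
        have : (0:ℝ) < (k:ℝ) := by linarith
        positivity
      · have hkn : k < n := lt_of_le_of_lt h2 (Nat.sub_lt (by omega) one_pos)
        have : (k:ℝ) < (n:ℝ) := by exact_mod_cast hkn
        rw [ht]
        exact (div_lt_one hNpos).2 this
    -- subinterval integrability
    have hgsub : ∀ k < n, IntervalIntegrable g volume (t k) (t (k+1)) := by
      intro k hk
      apply hgint.mono_set
      rw [uIcc_of_le (htmono (Nat.le_succ k)), uIcc_of_le zero_le_one]
      exact Icc_subset_Icc (htIcc (le_of_lt hk)).1 (htIcc hk).2
    have hg0sub : ∀ k ≤ n, IntervalIntegrable g volume 0 (t k) := by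
      intro k hk
      apply hgint.mono_set
      rw [uIcc_of_le (htIcc hk).1, uIcc_of_le zero_le_one]
      exact Icc_subset_Icc le_rfl (htIcc hk).2
    have hfgsub : ∀ k < n, IntervalIntegrable (fun u => f u * g u) volume (t k) (t (k+1)) := by
      intro k hk
      apply hfg.mono_set
      rw [uIcc_of_le (htmono (Nat.le_succ k)), uIcc_of_le zero_le_one]
      exact Icc_subset_Icc (htIcc (le_of_lt hk)).1 (htIcc hk).2
    -- step values
    set v : ℕ → ℝ := fun k => f (t (max k 1)) with hv
    set w : ℕ → ℝ := fun k => f (t (min (max k 1) (n-1))) with hw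
    set b : ℕ → ℝ := fun k => (w (k+1) - w k)
        + (if k = 0 then 2*M else 0) + (if k + 1 = n then 2*M else 0) with hb
    set GG : ℕ → ℝ := fun k => ∫ u in (0:ℝ)..t k, g u with hGG
    have hGGd : ∀ k < n, GG (k+1) - GG k = ∫ u in t k..t (k+1), g u := by
      intro k hk
      have := intervalIntegral.integral_add_adjacent_intervals
        (hg0sub k (le_of_lt hk)) (hgsub k hk)
      rw [hGG]
      simp only at this ⊢
      linarith
    have hGG0 : GG 0 = 0 := by simp [hGG, ht0]
    have hGGn : GG n = 0 := by rw [hGG]; simp only [htn]; exact hG1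
    have hGGle : ∀ k ≤ n, GG k ≤ 0 := fun k hk => hG _ (htIcc hk)
    -- value lemmas
    have hvval : ∀ k, 1 ≤ k → v k = f (t k) := by
      intro k hk
      have e : max k 1 = k := by omega
      simp only [hv, e]
    have hv0 : v 0 = f (t 1) := by
      have e : max 0 1 = 1 := by omega
      simp only [hv, e]
    have hwval : ∀ k, 1 ≤ k → k ≤ n - 1 → w k = f (t k) := by
      intro k h1 h2
      have e : min (max k 1) (n-1) = k := by omega
      simp only [hw, e]
    have hw0 : w 0 = f (t 1) := by
      have e : min (max 0 1) (n-1) = 1 := by omega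
      simp only [hw, e]
    have hwtop : ∀ k, n - 1 ≤ k → w k = f (t (n-1)) := by
      intro k hk
      have e : min (max k 1) (n-1) = n - 1 := by omega
      simp only [hw, e]
    have hb0 : b 0 = 2*M := by
      simp only [hb]
      split_ifs <;>
        first
          | omega
          | (rw [hwval 1 le_rfl (by omega), hw0]; ring)
    have hbmid : ∀ k, 1 ≤ k → k + 1 < n → b k = f (t (k+1)) - f (t k) := by
      intro k h1 h2
      simp only [hb]
      split_ifs <;>
        first
          | omega
          | (rw [hwval (k+1) (by omega) (by omega), hwval k (by omega) (by omega)]; ring)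
    have hblast : ∀ k, 1 ≤ k → k + 1 = n → b k = 2*M := by
      intro k h1 h2
      simp only [hb]
      split_ifs <;>
        first
          | omega
          | (rw [hwtop (k+1) (by omega), hwtop k (by omega)]; ring)
    -- v is monotone below n-1
    have hvmono : ∀ i, i + 1 ≤ n - 1 → v i ≤ v (i+1) := by
      intro i hi
      rw [hv]
      simp only
      apply hmono (htIoo (le_max_right _ _) (by omega)) (htIoo (le_max_right _ _) (by omega))
      exact htmono (by omega)
    -- Abel summation: the step integral is nonnegative
    have hS : 0 ≤ ∑ k ∈ Finset.range n, v k * (GG (k+1) - GG k) := by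
      have habel := Finset.sum_range_by_parts v (fun k => GG (k+1) - GG k) n
      simp only [smul_eq_mul] at habel
      have htel : ∀ m : ℕ, ∑ i ∈ Finset.range m, (GG (i+1) - GG i) = GG m - GG 0 :=
        fun m => Finset.sum_range_sub GG m
      rw [habel]
      have h1 : v (n-1) * ∑ i ∈ Finset.range n, (GG (i+1) - GG i) = 0 := by
        rw [htel, hGGn, hGG0]; ring
      rw [h1, zero_sub, neg_nonneg]
      apply Finset.sum_nonpos
      intro i hi
      rw [Finset.mem_range] at hi
      rw [htel, hGG0, sub_zero]
      exact mul_nonpos_of_nonneg_of_nonpos (by linarith [hvmono i (by omega)])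
        (hGGle (i+1) (by omega))
    -- error bound on each subinterval
    have herr : ∀ k < n, |(∫ u in t k..t (k+1), f u * g u) - v k * (GG (k+1) - GG k)|
        ≤ b k * (1/n) := by
      intro k hk
      rw [hGGd k hk, ← intervalIntegral.integral_const_mul,
        ← intervalIntegral.integral_sub (hfgsub k hk) ((hgsub k hk).const_mul (v k))]
      have hlen : t (k+1) - t k = 1/n := by
        rw [ht]; push_cast; ring
      have hae : ∀ᵐ u : ℝ ∂volume, u ∈ Set.uIoc (t k) (t (k+1)) →
          ‖f u * g u - v k * g u‖ ≤ b k := by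
        have hne : ∀ᵐ u : ℝ ∂volume, u ≠ 1 := by
          exact compl_mem_ae_iff.2 (measure_singleton (1:ℝ))
        filter_upwards [hne] with u hu hmem
        rw [Set.uIoc_of_le (htmono (Nat.le_succ k))] at hmem
        obtain ⟨hu1, hu2⟩ := hmem
        have huIcc : u ∈ Icc (0:ℝ) 1 := ⟨le_of_lt (lt_of_le_of_lt (htIcc hk.le).1 hu1),
          le_trans hu2 (htIcc hk).2⟩
        have hgu : |g u| ≤ 1 := hgb u huIcc
        have hfu : |f u - v k| ≤ b k := by
          have huIoo : u ∈ Ioo (0:ℝ) 1 :=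
            ⟨lt_of_le_of_lt (htIcc hk.le).1 hu1, lt_of_le_of_ne (le_trans hu2 (htIcc hk).2) hu⟩
          rcases Nat.eq_zero_or_pos k with hk0 | hk1
          · -- first subinterval
            subst hk0
            rw [hb0, hv0]
            have h1 : |f (t 1)| ≤ M := hbdd _ (htIoo le_rfl (by omega))
            have h2 := hbdd u huIoo
            calc |f u - f (t 1)| ≤ |f u| + |f (t 1)| := abs_sub _ _
              _ ≤ 2*M := by linarith
          · rcases Nat.lt_or_ge (k+1) n with hklt | hkge
            · -- middle subinterval: k ≥ 1, k+1 ≤ n-1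
              have hk1le : k + 1 ≤ n - 1 := by omega
              have hfl : f (t k) ≤ f u := by
                apply hmono (htIoo hk1 (by omega)) huIoo
                exact le_of_lt hu1
              have hfu2 : f u ≤ f (t (k+1)) := by
                apply hmono huIoo (htIoo (by omega) hk1le) hu2
              rw [hvval k hk1, hbmid k hk1 hklt, abs_le]
              constructor <;> linarith
            · -- last subinterval : k + 1 = n
              have hkn : k + 1 = n := by omega
              rw [hblast k hk1 hkn, hvval k hk1]
              have h1 : |f (t k)| ≤ M := hbdd _ (htIoo hk1 (by omega))
              have h2 := hbdd u huIoo
              calc |f u - f (t k)| ≤ |f u| + |f (t k)| := abs_sub _ _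
                _ ≤ 2*M := by linarith
        calc ‖f u * g u - v k * g u‖ = |f u - v k| * |g u| := by
              rw [← abs_mul]; congr 1; ring
          _ ≤ b k * 1 := by
              apply mul_le_mul hfu hgu (abs_nonneg _)
              exact le_trans (abs_nonneg _) hfu
          _ = b k := mul_one _
      have hnorm := intervalIntegral.norm_integral_le_of_norm_le_const_ae (C := b k) (a := t k)
        (b := t (k+1)) (f := fun u => f u * g u - v k * g u) hae
      have h2 : b k * |t (k+1) - t k| = b k * (1/n) := by
        rw [hlen, abs_of_nonneg (by positivity : (0:ℝ) ≤ 1/(n:ℝ))]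
      rw [h2] at hnorm
      simpa using hnorm
    -- sum of b
    have hbsum : ∑ k ∈ Finset.range n, b k ≤ 6*M := by
      rw [hb]
      simp only
      rw [Finset.sum_add_distrib, Finset.sum_add_distrib]
      have h1 : ∑ k ∈ Finset.range n, (w (k+1) - w k) = w n - w 0 := Finset.sum_range_sub w n
      have h2 : (∑ k ∈ Finset.range n, if k = 0 then 2*M else 0) = 2*M := by
        rw [Finset.sum_ite_eq' (Finset.range n) 0 (fun _ => 2*M),
          if_pos (Finset.mem_range.2 (by omega))]
      have h3 : (∑ k ∈ Finset.range n, if k + 1 = n then 2*M else 0) = 2*M := by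
        have : ∀ k, (k + 1 = n) ↔ (k = n - 1) := by omega
        simp only [this]
        rw [Finset.sum_ite_eq' (Finset.range n) (n-1) (fun _ => 2*M),
          if_pos (Finset.mem_range.2 (by omega))]
      rw [h1, h2, h3]
      have hwn : |w n| ≤ M := by
        rw [hw]; exact hbdd _ (htIoo (by omega) (by omega))
      have hw0 : |w 0| ≤ M := by
        rw [hw]; exact hbdd _ (htIoo (by omega) (by omega))
      rw [abs_le] at hwn hw0
      linarith [hwn.1, hwn.2, hw0.1, hw0.2]
    -- assemble
    have hsplit : I = ∑ k ∈ Finset.range n, ∫ u in t k..t (k+1), f u * g u := by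
      rw [hI, intervalIntegral.sum_integral_adjacent_intervals hfgsub, ht0, htn]
    have hfinal : I ≥ (∑ k ∈ Finset.range n, v k * (GG (k+1) - GG k))
        - (∑ k ∈ Finset.range n, b k) * (1/n) := by
      rw [hsplit, ge_iff_le]
      calc (∑ k ∈ Finset.range n, v k * (GG (k+1) - GG k))
            - (∑ k ∈ Finset.range n, b k) * (1/n)
          = ∑ k ∈ Finset.range n, (v k * (GG (k+1) - GG k) - b k * (1/n)) := by
            rw [Finset.sum_sub_distrib, Finset.sum_mul]
        _ ≤ ∑ k ∈ Finset.range n, ∫ u in t k..t (k+1), f u * g u := by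
            apply Finset.sum_le_sum
            intro k hk
            rw [Finset.mem_range] at hk
            have := herr k hk
            rw [abs_le] at this
            linarith [this.1]
    have : (∑ k ∈ Finset.range n, b k) * (1/n) ≤ 6*M/n :=
      le_trans (mul_le_mul_of_nonneg_right hbsum (by positivity)) (le_of_eq (by ring))
    linarith [hS, hfinal]
  -- conclude
  by_contra hcon
  push_neg at hcon
  obtain ⟨n, hn⟩ := exists_nat_gt (max 2 (6*M / (-I)))
  have hn2 : 2 ≤ n := by
    have : (2:ℝ) ≤ (n:ℝ) := le_of_lt (lt_of_le_of_lt (le_max_left _ _) hn)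
    exact_mod_cast this
  have hIneg : 0 < -I := by linarith
  have hNpos : (0:ℝ) < n := by positivity
  have h1 : 6*M / (-I) < n := lt_of_le_of_lt (le_max_right _ _) hn
  have h2 : 6*M < n * (-I) := (div_lt_iff₀ hIneg).1 h1
  have h3 : 6*M/n < -I := by
    rw [div_lt_iff₀ hNpos]; linarith [h2]
  have := key n hn2
  linarith

/-- If `C₁ ≤ C₂` pointwise (concordance order), `F⁻¹` is nondecreasing and bounded, and
`cⱼ u = Cⱼ(α|u)` are the conditional distributions (so `∫₀ᵗ cⱼ = Cⱼ(t,α)`), then the weighted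
integral of `F⁻¹` against `(1 − c₁)/(1−α)` is at most the one against `(1 − c₂)/(1−α)`. -/
theorem stmt_8 (C₁ C₂ : Copula)
    (hle : ∀ u ∈ Set.Icc (0 : ℝ) 1, ∀ v ∈ Set.Icc (0 : ℝ) 1, C₁.toFun u v ≤ C₂.toFun u v)
    (α : ℝ) (hα : α ∈ Set.Ioo (0 : ℝ) 1)
    (c₁ c₂ : ℝ → ℝ)
    (hc₁int : IntervalIntegrable c₁ volume 0 1)
    (hc₂int : IntervalIntegrable c₂ volume 0 1)
    (hc₁b : ∀ u ∈ Set.Icc (0 : ℝ) 1, c₁ u ∈ Set.Icc (0 : ℝ) 1)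
    (hc₂b : ∀ u ∈ Set.Icc (0 : ℝ) 1, c₂ u ∈ Set.Icc (0 : ℝ) 1)
    (hc₁ : ∀ t ∈ Set.Icc (0 : ℝ) 1, (∫ u in (0 : ℝ)..t, c₁ u) = C₁.toFun t α)
    (hc₂ : ∀ t ∈ Set.Icc (0 : ℝ) 1, (∫ u in (0 : ℝ)..t, c₂ u) = C₂.toFun t α)
    (Finv : ℝ → ℝ) (hmono : MonotoneOn Finv (Set.Ioo 0 1))
    (M : ℝ) (hbdd : ∀ u ∈ Set.Ioo (0 : ℝ) 1, |Finv u| ≤ M)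
    (h₁ : IntervalIntegrable (fun u => Finv u * ((1 - c₁ u) / (1 - α))) volume 0 1)
    (h₂ : IntervalIntegrable (fun u => Finv u * ((1 - c₂ u) / (1 - α))) volume 0 1) :
    (∫ u in (0 : ℝ)..1, Finv u * ((1 - c₁ u) / (1 - α)))
      ≤ ∫ u in (0 : ℝ)..1, Finv u * ((1 - c₂ u) / (1 - α)) := by
  obtain ⟨hα0, hα1⟩ := hα
  have h1α : (0:ℝ) < 1 - α := by linarith
  set g : ℝ → ℝ := fun u => c₁ u - c₂ u with hg
  have hgint : IntervalIntegrable g volume 0 1 := hc₁int.sub hc₂int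
  have hgb : ∀ u ∈ Set.Icc (0:ℝ) 1, |g u| ≤ 1 := by
    intro u hu
    obtain ⟨a1, a2⟩ := hc₁b u hu
    obtain ⟨b1, b2⟩ := hc₂b u hu
    rw [hg, abs_le]
    constructor <;> simp <;> linarith
  have hαIcc : α ∈ Set.Icc (0:ℝ) 1 := ⟨le_of_lt hα0, le_of_lt hα1⟩
  have hGval : ∀ t ∈ Set.Icc (0:ℝ) 1,
      (∫ u in (0:ℝ)..t, g u) = C₁.toFun t α - C₂.toFun t α := by
    intro t ht
    have h1 : IntervalIntegrable c₁ volume 0 t := by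
      apply hc₁int.mono_set
      rw [uIcc_of_le ht.1, uIcc_of_le zero_le_one]
      exact Icc_subset_Icc le_rfl ht.2
    have h2 : IntervalIntegrable c₂ volume 0 t := by
      apply hc₂int.mono_set
      rw [uIcc_of_le ht.1, uIcc_of_le zero_le_one]
      exact Icc_subset_Icc le_rfl ht.2
    rw [hg]
    rw [intervalIntegral.integral_sub h1 h2, hc₁ t ht, hc₂ t ht]
  have hG : ∀ t ∈ Set.Icc (0:ℝ) 1, (∫ u in (0:ℝ)..t, g u) ≤ 0 := by
    intro t ht
    rw [hGval t ht, sub_nonpos]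
    exact hle t ht α hαIcc
  have hG1 : (∫ u in (0:ℝ)..1, g u) = 0 := by
    rw [hGval 1 (by norm_num), C₁.margin_left α hαIcc, C₂.margin_left α hαIcc, sub_self]
  have heq : (fun u => Finv u * g u)
      = fun u => (1 - α) * (Finv u * ((1 - c₂ u) / (1 - α))
        - Finv u * ((1 - c₁ u) / (1 - α))) := by
    funext u
    rw [hg]
    field_simp
    ring
  have hfg : IntervalIntegrable (fun u => Finv u * g u) volume 0 1 := by
    rw [heq]
    exact (h₂.sub h₁).const_mul (1 - α)
  have hkey : 0 ≤ ∫ u in (0:ℝ)..1, Finv u * g u :=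
    aux_step_nonneg g hgint hgb hG hG1 Finv hmono M hbdd hfg
  rw [← sub_nonneg, ← intervalIntegral.integral_sub h₂ h₁]
  have heq2 : ∀ u : ℝ, Finv u * ((1 - c₂ u) / (1 - α)) - Finv u * ((1 - c₁ u) / (1 - α))
      = (Finv u * g u) / (1 - α) := by
    intro u
    rw [hg]
    field_simp
    ring
  calc (0:ℝ) ≤ (∫ u in (0:ℝ)..1, Finv u * g u) / (1 - α) := by positivity
    _ = ∫ u in (0:ℝ)..1, (Finv u * g u) / (1 - α) := by
        rw [intervalIntegral.integral_div]
    _ = ∫ u in (0:ℝ)..1, (Finv u * ((1 - c₂ u) / (1 - α))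
          - Finv u * ((1 - c₁ u) / (1 - α))) := by
        simp_rw [heq2]
end

section
/- Let C be a bivariate copula whose conditional distribution C(α|u) is nonincreasing in u for every α (stochastic increasingness), and let F⁻¹ : (0,1) → ℝ be a nondecreasing bounded quantile function. Then for every α ∈ (0,1), ∫₀¹ F⁻¹(u) (1 − C(α|u))/(1−α) du ≥ ∫₀¹ F⁻¹(u) du, with strict inequality whenever F⁻¹ is non-constant on a set of positive measure and C is not the independence copula at level α. -/
open MeasureTheory Set

private lemma cheb_expand (f g : ℝ → ℝ) :
    (fun z : ℝ × ℝ => (f z.1 - f z.2) * (g z.1 - g z.2))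
      = fun z : ℝ × ℝ => ((f z.1 * g z.1) * (1 : ℝ) - f z.1 * g z.2)
          - (g z.1 * f z.2 - (1 : ℝ) * (f z.2 * g z.2)) := by
  funext z; ring

private lemma cheb_integrable {μ : Measure ℝ} [IsProbabilityMeasure μ] {f g : ℝ → ℝ}
    (hf : Integrable f μ) (hg : Integrable g μ)
    (hfg : Integrable (fun u => f u * g u) μ) :
    Integrable (fun z : ℝ × ℝ => (f z.1 - f z.2) * (g z.1 - g z.2)) (μ.prod μ) := by
  rw [cheb_expand]
  exact ((hfg.mul_prod (integrable_const 1)).sub (hf.mul_prod hg)).sub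
    ((hg.mul_prod hf).sub ((integrable_const 1).mul_prod hfg))

private lemma cheb_key {μ : Measure ℝ} [IsProbabilityMeasure μ] {f g : ℝ → ℝ}
    (hf : Integrable f μ) (hg : Integrable g μ)
    (hfg : Integrable (fun u => f u * g u) μ) :
    (∫ z : ℝ × ℝ, (f z.1 - f z.2) * (g z.1 - g z.2) ∂(μ.prod μ))
      = 2 * ((∫ u, f u * g u ∂μ) - (∫ u, f u ∂μ) * (∫ u, g u ∂μ)) := by
  have h1 := hfg.mul_prod (integrable_const (1 : ℝ) (μ := μ))
  have h2 := hf.mul_prod hg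
  have h3 := hg.mul_prod hf
  have h4 := (integrable_const (1 : ℝ) (μ := μ)).mul_prod hfg
  have e1 : (∫ z : ℝ × ℝ, (f z.1 * g z.1) * (1 : ℝ) ∂(μ.prod μ))
      = (∫ u, f u * g u ∂μ) * (∫ _u : ℝ, (1 : ℝ) ∂μ) :=
    integral_prod_mul (fun u => f u * g u) (fun _ => (1 : ℝ))
  have e2 : (∫ z : ℝ × ℝ, f z.1 * g z.2 ∂(μ.prod μ))
      = (∫ u, f u ∂μ) * (∫ u, g u ∂μ) := integral_prod_mul f g
  have e3 : (∫ z : ℝ × ℝ, g z.1 * f z.2 ∂(μ.prod μ))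
      = (∫ u, g u ∂μ) * (∫ u, f u ∂μ) := integral_prod_mul g f
  have e4 : (∫ z : ℝ × ℝ, (1 : ℝ) * (f z.2 * g z.2) ∂(μ.prod μ))
      = (∫ _u : ℝ, (1 : ℝ) ∂μ) * (∫ u, f u * g u ∂μ) :=
    integral_prod_mul (fun _ => (1 : ℝ)) (fun u => f u * g u)
  have hone : (∫ _u : ℝ, (1 : ℝ) ∂μ) = 1 := by simp
  have E1 : (∫ z : ℝ × ℝ, ((f z.1 * g z.1) * (1:ℝ) - f z.1 * g z.2)
        - (g z.1 * f z.2 - (1:ℝ) * (f z.2 * g z.2)) ∂(μ.prod μ))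
      = (∫ z : ℝ × ℝ, (f z.1 * g z.1) * (1:ℝ) - f z.1 * g z.2 ∂(μ.prod μ))
        - ∫ z : ℝ × ℝ, g z.1 * f z.2 - (1:ℝ) * (f z.2 * g z.2) ∂(μ.prod μ) :=
    integral_sub (h1.sub h2) (h3.sub h4)
  have E2 : (∫ z : ℝ × ℝ, (f z.1 * g z.1) * (1:ℝ) - f z.1 * g z.2 ∂(μ.prod μ))
      = (∫ z : ℝ × ℝ, (f z.1 * g z.1) * (1:ℝ) ∂(μ.prod μ))
        - ∫ z : ℝ × ℝ, f z.1 * g z.2 ∂(μ.prod μ) := integral_sub h1 h2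
  have E3 : (∫ z : ℝ × ℝ, g z.1 * f z.2 - (1:ℝ) * (f z.2 * g z.2) ∂(μ.prod μ))
      = (∫ z : ℝ × ℝ, g z.1 * f z.2 ∂(μ.prod μ))
        - ∫ z : ℝ × ℝ, (1:ℝ) * (f z.2 * g z.2) ∂(μ.prod μ) := integral_sub h3 h4
  rw [cheb_expand, E1, E2, E3, e1, e2, e3, e4, hone]
  ring

/-- If the conditional distribution `u ↦ C(α|u)` of a copula is nonincreasing (stochastic
increasingness) and `F⁻¹` is nondecreasing and bounded, then
`∫₀¹ F⁻¹(u)(1 − C(α|u))/(1−α) du ≥ ∫₀¹ F⁻¹(u) du`, with strict inequality whenever `F⁻¹` is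
non-constant on a set of positive measure and `C` is not the independence copula at level `α`. -/
theorem stmt_11 (α : ℝ) (hα : α ∈ Set.Ioo (0 : ℝ) 1)
    (Ccond : ℝ → ℝ)
    (hanti : AntitoneOn Ccond (Set.Icc 0 1))
    (hbound : ∀ u ∈ Set.Icc (0 : ℝ) 1, Ccond u ∈ Set.Icc (0 : ℝ) 1)
    (hCint : IntervalIntegrable Ccond volume 0 1)
    (htot : (∫ u in (0 : ℝ)..1, Ccond u) = α)
    (Finv : ℝ → ℝ) (hmono : MonotoneOn Finv (Set.Ioo 0 1))
    (M : ℝ) (hbdd : ∀ u ∈ Set.Ioo (0 : ℝ) 1, |Finv u| ≤ M)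
    (hFint : IntervalIntegrable Finv volume 0 1)
    (hprod : IntervalIntegrable (fun u => Finv u * ((1 - Ccond u) / (1 - α))) volume 0 1) :
    ((∫ u in (0 : ℝ)..1, Finv u)
        ≤ ∫ u in (0 : ℝ)..1, Finv u * ((1 - Ccond u) / (1 - α))) ∧
      ((¬ ∃ c : ℝ, ∀ᵐ u ∂(volume.restrict (Set.Ioo (0 : ℝ) 1)), Finv u = c) →
        (¬ ∀ᵐ u ∂(volume.restrict (Set.Ioo (0 : ℝ) 1)), Ccond u = α) →
        (∫ u in (0 : ℝ)..1, Finv u)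
          < ∫ u in (0 : ℝ)..1, Finv u * ((1 - Ccond u) / (1 - α))) := by
  obtain ⟨hα0, hα1⟩ := hα
  have h1α : (0 : ℝ) < 1 - α := by linarith
  set μ : Measure ℝ := volume.restrict (Set.Ioo (0 : ℝ) 1) with hμ
  haveI : IsProbabilityMeasure μ := by
    constructor
    rw [hμ, Measure.restrict_apply_univ, Real.volume_Ioo]
    norm_num
  set g : ℝ → ℝ := fun u => (1 - Ccond u) / (1 - α) with hg
  -- translate interval integrals
  have tF : (∫ u in (0 : ℝ)..1, Finv u) = ∫ u, Finv u ∂μ := by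
    rw [intervalIntegral.integral_of_le zero_le_one, integral_Ioc_eq_integral_Ioo]
  have tC : (∫ u, Ccond u ∂μ) = α := by
    rw [← htot, intervalIntegral.integral_of_le zero_le_one, integral_Ioc_eq_integral_Ioo]
  have tP : (∫ u in (0 : ℝ)..1, Finv u * ((1 - Ccond u) / (1 - α)))
      = ∫ u, Finv u * g u ∂μ := by
    rw [intervalIntegral.integral_of_le zero_le_one, integral_Ioc_eq_integral_Ioo]
  -- integrability
  have hf : Integrable Finv μ := hFint.1.mono_set Set.Ioo_subset_Ioc_self
  have hC : Integrable Ccond μ := hCint.1.mono_set Set.Ioo_subset_Ioc_self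
  have hgi : Integrable g μ := ((integrable_const (1 : ℝ)).sub hC).div_const (1 - α)
  have hfg : Integrable (fun u => Finv u * g u) μ :=
    hprod.1.mono_set Set.Ioo_subset_Ioc_self
  -- ∫ g = 1
  have hIg : (∫ u, g u ∂μ) = 1 := by
    rw [hg]
    rw [integral_div, integral_sub (integrable_const 1) hC, tC]
    simp only [integral_const, measure_univ, ENNReal.toReal_one, probReal_univ, smul_eq_mul, mul_one]
    field_simp
  -- g monotone on Ioo
  have hgmono : MonotoneOn g (Set.Ioo (0 : ℝ) 1) := by
    intro u hu v hv huv
    have : Ccond v ≤ Ccond u :=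
      hanti (Set.Ioo_subset_Icc_self hu) (Set.Ioo_subset_Icc_self hv) huv
    rw [hg]
    dsimp only
    gcongr
  -- a.e. membership in product
  have hprodμ : μ.prod μ
      = (volume.prod volume).restrict ((Set.Ioo (0:ℝ) 1) ×ˢ (Set.Ioo (0:ℝ) 1)) :=
    Measure.prod_restrict _ _
  have hmem : ∀ᵐ z ∂(μ.prod μ), z ∈ (Set.Ioo (0:ℝ) 1) ×ˢ (Set.Ioo (0:ℝ) 1) := by
    rw [hprodμ]
    exact ae_restrict_mem (measurableSet_Ioo.prod measurableSet_Ioo)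
  have hnonneg : ∀ z ∈ (Set.Ioo (0:ℝ) 1) ×ˢ (Set.Ioo (0:ℝ) 1),
      0 ≤ (Finv z.1 - Finv z.2) * (g z.1 - g z.2) := by
    rintro ⟨u, v⟩ ⟨hu, hv⟩
    rcases le_total u v with h | h
    · nlinarith [hmono hu hv h, hgmono hu hv h]
    · nlinarith [hmono hv hu h, hgmono hv hu h]
  have hE := cheb_key hf hgi hfg
  have hEnn : 0 ≤ ∫ z : ℝ × ℝ, (Finv z.1 - Finv z.2) * (g z.1 - g z.2) ∂(μ.prod μ) :=
    integral_nonneg_of_ae (hmem.mono fun z hz => hnonneg z hz)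
  have hIneq : (∫ u, Finv u ∂μ) ≤ ∫ u, Finv u * g u ∂μ := by
    rw [hE, hIg] at hEnn; linarith
  constructor
  · rw [tF, tP]; exact hIneq
  · intro hnc hni
    rw [tF, tP]
    -- Finv non-constant: get u1 < u2 with Finv u1 < Finv u2
    have hFnc : ∃ u1 ∈ Set.Ioo (0:ℝ) 1, ∃ u2 ∈ Set.Ioo (0:ℝ) 1,
        u1 < u2 ∧ Finv u1 < Finv u2 := by
      by_contra hcon
      push_neg at hcon
      apply hnc
      refine ⟨Finv (1/2), ?_⟩
      have hhalf : (1/2 : ℝ) ∈ Set.Ioo (0:ℝ) 1 := by norm_num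
      have hconst : ∀ u ∈ Set.Ioo (0:ℝ) 1, Finv u = Finv (1/2) := by
        intro u hu
        rcases lt_trichotomy u (1/2) with h | h | h
        · exact le_antisymm (hmono hu hhalf h.le)
            (not_lt.1 fun hlt => absurd (hcon u hu (1/2) hhalf h) (by simpa using hlt))
        · rw [h]
        · exact le_antisymm
            (not_lt.1 fun hlt => absurd (hcon (1/2) hhalf u hu h) (by simpa using hlt))
            (hmono hhalf hu h.le)
      have : ∀ᵐ u ∂μ, u ∈ Set.Ioo (0:ℝ) 1 := ae_restrict_mem measurableSet_Ioo
      exact this.mono fun u hu => hconst u hu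
    -- Ccond non-constant: get v1 < v2 with g v1 < g v2
    have hCnc : ∃ v1 ∈ Set.Ioo (0:ℝ) 1, ∃ v2 ∈ Set.Ioo (0:ℝ) 1,
        v1 < v2 ∧ g v1 < g v2 := by
      by_contra hcon
      push_neg at hcon
      apply hni
      have hconst : ∀ u ∈ Set.Ioo (0:ℝ) 1, g u = g (1/2) := by
        intro u hu
        have hhalf : (1/2 : ℝ) ∈ Set.Ioo (0:ℝ) 1 := by norm_num
        rcases lt_trichotomy u (1/2) with h | h | h
        · exact le_antisymm (hgmono hu hhalf h.le)
            (not_lt.1 fun hlt => absurd (hcon u hu (1/2) hhalf h) (by simpa using hlt))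
        · rw [h]
        · exact le_antisymm
            (not_lt.1 fun hlt => absurd (hcon (1/2) hhalf u hu h) (by simpa using hlt))
            (hgmono hhalf hu h.le)
      have hgc : (∫ u, g u ∂μ) = g (1/2) := by
        have : ∀ᵐ u ∂μ, g u = g (1/2) :=
          (ae_restrict_mem measurableSet_Ioo).mono fun u hu => hconst u hu
        rw [integral_congr_ae this]
        simp
      have hg12 : g (1/2) = 1 := by rw [← hgc, hIg]
      have hC12 : Ccond (1/2) = α := by
        have : (1 - Ccond (1/2)) / (1 - α) = 1 := hg12
        field_simp at this
        linarith
      have : ∀ᵐ u ∂μ, u ∈ Set.Ioo (0:ℝ) 1 := ae_restrict_mem measurableSet_Ioo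
      refine this.mono fun u hu => ?_
      have h1 : g u = 1 := by rw [hconst u hu, hg12]
      have : (1 - Ccond u) / (1 - α) = 1 := h1
      field_simp at this
      linarith
    obtain ⟨u1, hu1, u2, hu2, hu12, hFlt⟩ := hFnc
    obtain ⟨v1, hv1, v2, hv2, hv12, hglt⟩ := hCnc
    set m : ℝ := min u1 v1 with hm
    set Mx : ℝ := max u2 v2 with hMx
    have hm0 : 0 < m := lt_min hu1.1 hv1.1
    have hm1 : m < 1 := lt_of_le_of_lt (min_le_left _ _) hu1.2
    have hMx1 : Mx < 1 := max_lt hu2.2 hv2.2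
    have hMx0 : 0 < Mx := lt_of_lt_of_le hu2.1 (le_max_left _ _)
    set A : Set ℝ := Set.Ioo 0 m with hA
    set B : Set ℝ := Set.Ioo Mx 1 with hB
    have hAsub : A ⊆ Set.Ioo (0:ℝ) 1 := Set.Ioo_subset_Ioo le_rfl hm1.le
    have hBsub : B ⊆ Set.Ioo (0:ℝ) 1 := Set.Ioo_subset_Ioo hMx0.le le_rfl
    -- integrand strictly positive on B ×ˢ A
    have hpos : ∀ z ∈ B ×ˢ A, 0 < (Finv z.1 - Finv z.2) * (g z.1 - g z.2) := by
      rintro ⟨u, v⟩ ⟨hu, hv⟩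
      have huI : u ∈ Set.Ioo (0:ℝ) 1 := hBsub hu
      have hvI : v ∈ Set.Ioo (0:ℝ) 1 := hAsub hv
      have hf1 : Finv v ≤ Finv u1 :=
        hmono hvI hu1 (le_of_lt (lt_of_lt_of_le hv.2 (min_le_left _ _)))
      have hf2 : Finv u2 ≤ Finv u :=
        hmono hu2 huI (le_of_lt (lt_of_le_of_lt (le_max_left _ _) hu.1))
      have hg1 : g v ≤ g v1 :=
        hgmono hvI hv1 (le_of_lt (lt_of_lt_of_le hv.2 (min_le_right _ _)))
      have hg2 : g v2 ≤ g u :=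
        hgmono hv2 huI (le_of_lt (lt_of_le_of_lt (le_max_right _ _) hu.1))
      have : Finv v < Finv u := by linarith
      have : g v < g u := by linarith
      nlinarith
    -- the product set has positive measure
    have hμA : μ A = ENNReal.ofReal m := by
      rw [hμ, Measure.restrict_apply measurableSet_Ioo,
        Set.inter_eq_self_of_subset_left hAsub, Real.volume_Ioo, sub_zero]
    have hμB : μ B = ENNReal.ofReal (1 - Mx) := by
      rw [hμ, Measure.restrict_apply measurableSet_Ioo,
        Set.inter_eq_self_of_subset_left hBsub, Real.volume_Ioo]
    have hBA : 0 < (μ.prod μ) (B ×ˢ A) := by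
      rw [Measure.prod_prod, hμA, hμB]
      exact ENNReal.mul_pos (ENNReal.ofReal_pos.2 (by linarith : (0:ℝ) < 1 - Mx)).ne'
        (ENNReal.ofReal_pos.2 hm0).ne'
    -- strict positivity of the double integral
    have hInt2 := cheb_integrable hf hgi hfg
    have hEpos : 0 < ∫ z : ℝ × ℝ, (Finv z.1 - Finv z.2) * (g z.1 - g z.2) ∂(μ.prod μ) := by
      rcases hEnn.lt_or_eq with h | h
      · exact h
      · exfalso
        have h0 : (fun z : ℝ × ℝ => (Finv z.1 - Finv z.2) * (g z.1 - g z.2))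
            =ᵐ[μ.prod μ] 0 := by
          rw [← integral_eq_zero_iff_of_nonneg_ae
            (hmem.mono fun z hz => hnonneg z hz) hInt2]
          exact h.symm
        have hnull : (μ.prod μ) {z : ℝ × ℝ |
            ¬ (Finv z.1 - Finv z.2) * (g z.1 - g z.2) = 0} = 0 := by
          have := h0
          rw [Filter.EventuallyEq, ae_iff] at this
          simpa using this
        have hsub : B ×ˢ A ⊆ {z : ℝ × ℝ |
            ¬ (Finv z.1 - Finv z.2) * (g z.1 - g z.2) = 0} :=
          fun z hz => ne_of_gt (hpos z hz)
        exact absurd (measure_mono_null hsub hnull) (ne_of_gt hBA)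
    rw [hE, hIg] at hEpos
    linarith
end

section
/- Suppose W ⫫ (Y(0), Y(1), S(0), S(1)) | X (unconfoundedness) with propensity score ρ(X) := P(W = 1 | X) ∈ (0,1) a.s., and let Y := W·Y(1) + (1−W)·Y(0), S := W·S(1) + (1−W)·S(0). Then E[Y(1)] = E[ (1/ρ(X)) E[Y·W | S, X] ] = E[ (ρ(S,X)/ρ(X)) E[Y | W = 1, S, X] ], where ρ(S,X) := P(W = 1 | S, X). -/
open MeasureTheory ProbabilityTheory Set
open scoped ENNReal

lemma condexp_indicator_mul_of_fact {Ω : Type*} {m mZ m0 : MeasurableSpace Ω}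
    (hm : m ≤ m0) (hmZ : mZ ≤ m0) {μ : Measure Ω} [IsFiniteMeasure μ]
    {A : Set Ω} (hA : MeasurableSet A)
    (hfact : ∀ B : Set Ω, MeasurableSet[mZ] B →
      (μ[(A ∩ B).indicator (fun _ => (1:ℝ)) | m]) =ᵐ[μ]
        fun ω => (μ[A.indicator (fun _ => (1:ℝ)) | m]) ω
          * (μ[B.indicator (fun _ => (1:ℝ)) | m]) ω)
    {f : Ω → ℝ} (hfm : StronglyMeasurable[mZ] f) (hfint : Integrable f μ) :
    μ[fun ω => A.indicator (fun _ => (1:ℝ)) ω * f ω | m]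
      =ᵐ[μ] fun ω => (μ[A.indicator (fun _ => (1:ℝ)) | m]) ω * (μ[f | m]) ω := by
  haveI : SigmaFinite (μ.trim hm) := by
    have : IsFiniteMeasure (μ.trim hm) := isFiniteMeasure_trim hm
    infer_instance
  haveI : SigmaFinite (μ.trim hmZ) := by
    have : IsFiniteMeasure (μ.trim hmZ) := isFiniteMeasure_trim hmZ
    infer_instance
  set E1A := μ[A.indicator (fun _ => (1:ℝ)) | m] with hE1A
  have hE1A_sm : StronglyMeasurable[m] E1A := stronglyMeasurable_condExp
  have hE1A_bd : ∀ᵐ ω ∂μ, |E1A ω| ≤ 1 := by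
    have h0 : 0 ≤ᵐ[μ] E1A :=
      condExp_nonneg (Filter.Eventually.of_forall fun ω =>
        Set.indicator_nonneg (fun _ _ => zero_le_one) ω)
    have h1 : E1A ≤ᵐ[μ] μ[fun _ => (1:ℝ) | m] := by
      refine condExp_mono ((integrable_const (1:ℝ)).indicator hA) (integrable_const 1) ?_
      refine Filter.Eventually.of_forall fun ω => ?_
      by_cases hω : ω ∈ A <;> simp [Set.indicator_apply, hω]
    rw [condExp_const hm] at h1
    filter_upwards [h0, h1] with ω h0 h1
    have h0' : (0:ℝ) ≤ E1A ω := by simpa using h0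
    rw [abs_le]
    exact ⟨by linarith, h1⟩
  -- indicator bound
  have hind_bd : ∀ ω, |A.indicator (fun _ => (1:ℝ)) ω| ≤ 1 := fun ω => by
    by_cases hω : ω ∈ A <;> simp [Set.indicator_apply, hω]
  -- multiplication by an a.e.-bounded function preserves integrability
  have hv_int : ∀ {v g : Ω → ℝ}, AEStronglyMeasurable v μ → (∀ᵐ ω ∂μ, |v ω| ≤ 1) →
      Integrable g μ → Integrable (fun ω => v ω * g ω) μ := by
    intro v g hv hvbd hg
    refine hg.norm.mono' (hv.mul hg.1) ?_
    filter_upwards [hvbd] with ω hω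
    rw [Real.norm_eq_abs, Real.norm_eq_abs, abs_mul]
    exact mul_le_of_le_one_left (abs_nonneg _) hω
  set P : (Ω → ℝ) → Prop := fun g =>
    Integrable g μ →
      (μ[fun ω => A.indicator (fun _ => (1:ℝ)) ω * g ω | m]
        =ᵐ[μ] fun ω => E1A ω * (μ[g | m]) ω) with hP
  have key : ∀ ⦃g : Ω → ℝ⦄, Integrable g (μ.trim hmZ) → P g := by
    refine @Integrable.induction Ω ℝ mZ _ (μ.trim hmZ) P ?_ ?_ ?_ ?_
    · -- indicators
      intro c s hs _ _
      have hxA : (fun ω => A.indicator (fun _ => (1:ℝ)) ω * s.indicator (fun _ => c) ω)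
          = fun ω => c • (A ∩ s).indicator (fun _ => (1:ℝ)) ω := by
        funext ω
        by_cases h1 : ω ∈ A <;> by_cases h2 : ω ∈ s <;>
          simp [Set.indicator_apply, h1, h2, Set.mem_inter_iff]
      have hxs : s.indicator (fun _ => c) = fun ω => c • s.indicator (fun _ => (1:ℝ)) ω := by
        funext ω; by_cases h2 : ω ∈ s <;> simp [Set.indicator_apply, h2]
      rw [hxA, hxs]
      have h1 : μ[fun ω => c • (A ∩ s).indicator (fun _ => (1:ℝ)) ω | m]
          =ᵐ[μ] c • μ[(A ∩ s).indicator (fun _ => (1:ℝ)) | m] :=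
        condExp_smul c ((A ∩ s).indicator (fun _ => (1:ℝ))) m
      have h2 : μ[fun ω => c • s.indicator (fun _ => (1:ℝ)) ω | m]
          =ᵐ[μ] c • μ[s.indicator (fun _ => (1:ℝ)) | m] :=
        condExp_smul c (s.indicator (fun _ => (1:ℝ))) m
      filter_upwards [h1, h2, hfact s hs] with ω h1 h2 h3
      simp only [Pi.smul_apply, smul_eq_mul] at h1 h2 ⊢
      rw [h1, h3, h2]; ring
    · -- additivity
      intro g₁ g₂ _ hg₁t hg₂t hPg₁ hPg₂ _
      have hg₁ : Integrable g₁ μ := integrable_of_integrable_trim hmZ hg₁t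
      have hg₂ : Integrable g₂ μ := integrable_of_integrable_trim hmZ hg₂t
      have hindm : AEStronglyMeasurable (A.indicator (fun _ => (1:ℝ))) μ :=
        (stronglyMeasurable_const.indicator hA).aestronglyMeasurable
      have hsplit : (fun ω => A.indicator (fun _ => (1:ℝ)) ω * (g₁ + g₂) ω)
          = (fun ω => A.indicator (fun _ => (1:ℝ)) ω * g₁ ω)
            + fun ω => A.indicator (fun _ => (1:ℝ)) ω * g₂ ω := by
        funext ω; simp only [Pi.add_apply]; ring
      rw [hsplit]
      have h1 := condExp_add (μ := μ) (m := m)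
        (hv_int hindm (Filter.Eventually.of_forall hind_bd) hg₁)
        (hv_int hindm (Filter.Eventually.of_forall hind_bd) hg₂)
      have h2 := condExp_add (μ := μ) (m := m) hg₁ hg₂
      filter_upwards [h1, h2, hPg₁ hg₁, hPg₂ hg₂] with ω h1 h2 h3 h4
      simp only [Pi.add_apply] at h1 h2 ⊢
      rw [h1, h2, h3, h4]; ring
    · -- closedness
      -- the map φ ↦ condexp of (v * φ), as an L¹-valued map, is 1-Lipschitz
      have hcont : ∀ (v : Ω → ℝ), AEStronglyMeasurable v μ → (∀ᵐ ω ∂μ, |v ω| ≤ 1) →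
          Continuous (fun φ : Lp ℝ 1 (μ.trim hmZ) =>
            Integrable.toL1 (μ[fun ω => v ω * φ ω | m]) integrable_condExp) := by
        intro v hv hvbd
        refine (LipschitzWith.of_dist_le_mul (K := 1) fun φ ψ => ?_).continuous
        simp only [NNReal.coe_one, one_mul]
        have hφ : Integrable (⇑φ) μ := integrable_of_integrable_trim hmZ (L1.integrable_coeFn φ)
        have hψ : Integrable (⇑ψ) μ := integrable_of_integrable_trim hmZ (L1.integrable_coeFn ψ)
        rw [dist_eq_norm, ← Integrable.toL1_sub _ _ integrable_condExp integrable_condExp,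
          L1.norm_of_fun_eq_integral_norm]
        have hsub : (μ[fun ω => v ω * φ ω | m]) - (μ[fun ω => v ω * ψ ω | m])
            =ᵐ[μ] μ[fun ω => v ω * (φ ω - ψ ω) | m] := by
          have h1 := (condExp_sub (μ := μ) (m := m)
            (hv_int hv hvbd hφ) (hv_int hv hvbd hψ)).symm
          refine h1.trans (condExp_congr_ae ?_)
          filter_upwards with ω
          simp only [Pi.sub_apply]; ring
        calc ∫ a, ‖((μ[fun ω => v ω * φ ω | m]) - (μ[fun ω => v ω * ψ ω | m])) a‖ ∂μ
            = ∫ a, ‖(μ[fun ω => v ω * (φ ω - ψ ω) | m]) a‖ ∂μ := by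
              refine integral_congr_ae ?_
              filter_upwards [hsub] with a ha
              rw [ha]
          _ ≤ ∫ a, ‖v a * (φ a - ψ a)‖ ∂μ := by
              simpa only [Real.norm_eq_abs] using
                integral_abs_condExp_le (μ := μ) (m := m) (fun ω => v ω * (φ ω - ψ ω))
          _ ≤ ∫ a, ‖φ a - ψ a‖ ∂μ := by
              refine integral_mono_ae ((hv_int hv hvbd (hφ.sub hψ)).norm) ((hφ.sub hψ).norm) ?_
              filter_upwards [hvbd] with ω hω
              rw [Real.norm_eq_abs, Real.norm_eq_abs, abs_mul]
              exact mul_le_of_le_one_left (abs_nonneg _) hω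
          _ = ∫ a, ‖φ a - ψ a‖ ∂(μ.trim hmZ) := by
              refine integral_trim_ae hmZ ?_
              exact ((Lp.aestronglyMeasurable φ).sub (Lp.aestronglyMeasurable ψ)).norm
          _ = dist φ ψ := by
              rw [L1.dist_eq_integral_dist]
              refine integral_congr_ae ?_
              filter_upwards with a
              rw [Real.dist_eq, Real.norm_eq_abs]
      have hset : {φ : Lp ℝ 1 (μ.trim hmZ) | P ⇑φ}
          = {φ : Lp ℝ 1 (μ.trim hmZ) |
              Integrable.toL1 (μ[fun ω => A.indicator (fun _ => (1:ℝ)) ω * φ ω | m])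
                integrable_condExp
              = Integrable.toL1 (μ[fun ω => E1A ω * φ ω | m]) integrable_condExp} := by
        ext φ
        have hφ : Integrable (⇑φ) μ := integrable_of_integrable_trim hmZ (L1.integrable_coeFn φ)
        have hprod : Integrable (E1A * ⇑φ) μ :=
          hv_int ((hE1A_sm.mono hm).aestronglyMeasurable) hE1A_bd hφ
        have hpull : μ[fun ω => E1A ω * φ ω | m] =ᵐ[μ] fun ω => E1A ω * (μ[⇑φ | m]) ω :=
          condExp_mul_of_stronglyMeasurable_left (μ := μ) hE1A_sm hprod hφ
        simp only [Set.mem_setOf_eq, Integrable.toL1_eq_toL1_iff]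
        constructor
        · intro h
          exact (h hφ).trans hpull.symm
        · intro h _
          exact h.trans hpull
      rw [hset]
      exact isClosed_eq
        (hcont _ (stronglyMeasurable_const.indicator hA).aestronglyMeasurable
          (Filter.Eventually.of_forall hind_bd))
        (hcont _ (hE1A_sm.mono hm).aestronglyMeasurable hE1A_bd)
    · -- a.e. congruence
      intro g₁ g₂ hg₁₂ hg₁t hPg₁ _
      have hae : g₁ =ᵐ[μ] g₂ := ae_eq_of_ae_eq_trim hg₁₂
      have hg₁ : Integrable g₁ μ := integrable_of_integrable_trim hmZ hg₁t
      have e1 : μ[fun ω => A.indicator (fun _ => (1:ℝ)) ω * g₂ ω | m]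
          =ᵐ[μ] μ[fun ω => A.indicator (fun _ => (1:ℝ)) ω * g₁ ω | m] :=
        condExp_congr_ae (hae.mono fun ω hω => by simp only [hω])
      have e2 : μ[g₁ | m] =ᵐ[μ] μ[g₂ | m] := condExp_congr_ae hae
      filter_upwards [e1, e2, hPg₁ hg₁] with ω e1 e2 e3
      rw [e1, e3, e2]
  exact key (hfint.trim hmZ hfm) hfint


lemma lintegral_ofReal_condexp_mul {Ω : Type*} {m m0 : MeasurableSpace Ω} (hm : m ≤ m0)
    (μ : Measure Ω) [IsFiniteMeasure μ]
    {g : Ω → ℝ} (hgint : Integrable g μ) (hg0 : 0 ≤ᵐ[μ] g)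
    {h : Ω → ℝ≥0∞} (hh : Measurable[m] h) :
    ∫⁻ ω, ENNReal.ofReal ((μ[g|m]) ω) * h ω ∂μ = ∫⁻ ω, ENNReal.ofReal (g ω) * h ω ∂μ := by
  haveI : SigmaFinite (μ.trim hm) := by
    have : IsFiniteMeasure (μ.trim hm) := isFiniteMeasure_trim hm
    infer_instance
  set ν := μ.withDensity (fun ω => ENNReal.ofReal (g ω)) with hν
  set ν' := μ.withDensity (fun ω => ENNReal.ofReal ((μ[g|m]) ω)) with hν'
  have hg_aem : AEMeasurable (fun ω => ENNReal.ofReal (g ω)) μ :=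
    ENNReal.measurable_ofReal.comp_aemeasurable hgint.1.aemeasurable
  have hc_meas : Measurable (fun ω => ENNReal.ofReal ((μ[g|m]) ω)) :=
    ENNReal.measurable_ofReal.comp ((stronglyMeasurable_condExp.mono hm).measurable)
  have hhm0 : Measurable h := hh.mono hm le_rfl
  have htrim : ν'.trim hm = ν.trim hm := by
    refine @Measure.ext Ω m _ _ fun s hs => ?_
    rw [trim_measurableSet_eq hm hs, trim_measurableSet_eq hm hs,
      withDensity_apply _ (hm s hs), withDensity_apply _ (hm s hs),
      ← ofReal_integral_eq_lintegral_ofReal hgint.restrict (ae_restrict_of_ae hg0),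
      ← ofReal_integral_eq_lintegral_ofReal integrable_condExp.restrict
        (ae_restrict_of_ae (condExp_nonneg hg0)),
      setIntegral_condExp hm hgint hs]
  calc ∫⁻ ω, ENNReal.ofReal ((μ[g|m]) ω) * h ω ∂μ
      = ∫⁻ ω, h ω ∂ν' := by
        rw [hν', lintegral_withDensity_eq_lintegral_mul₀ hc_meas.aemeasurable
          hhm0.aemeasurable]
        rfl
    _ = ∫⁻ ω, h ω ∂(ν'.trim hm) := (lintegral_trim hm hh).symm
    _ = ∫⁻ ω, h ω ∂(ν.trim hm) := by rw [htrim]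
    _ = ∫⁻ ω, h ω ∂ν := lintegral_trim hm hh
    _ = ∫⁻ ω, ENNReal.ofReal (g ω) * h ω ∂μ := by
        rw [hν, lintegral_withDensity_eq_lintegral_mul₀ hg_aem hhm0.aemeasurable]
        rfl


/-- Under unconfoundedness `W ⫫ (Y(0),Y(1),S(0),S(1)) | X` with propensity score
`ρ(X) = P(W=1 | X) ∈ (0,1)` a.s., writing `Y = W·Y(1)+(1−W)·Y(0)`,
`S = W·S(1)+(1−W)·S(0)` and `ρ(S,X) = P(W=1 | S,X)`, one has
`E[Y(1)] = E[(1/ρ(X)) E[Y·W | S,X]] = E[(ρ(S,X)/ρ(X)) E[Y | W=1, S,X]]`,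
where `E[Y | W=1, S,X] = E[Y·W | S,X]/ρ(S,X)`. -/
theorem stmt_17 {Ω 𝒳 : Type*} {m0 : MeasurableSpace Ω} [StandardBorelSpace Ω]
    [MeasurableSpace 𝒳]
    (μ : Measure Ω) [IsProbabilityMeasure μ]
    (Y0 Y1 S0 S1 W : Ω → ℝ) (X : Ω → 𝒳)
    (hY0 : Measurable Y0) (hY1 : Measurable Y1)
    (hS0 : Measurable S0) (hS1 : Measurable S1)
    (hWm : Measurable W) (hXm : Measurable X)
    (hW01 : ∀ ω, W ω = 0 ∨ W ω = 1)
    (hY0int : Integrable Y0 μ) (hY1int : Integrable Y1 μ)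
    (Yobs Sobs : Ω → ℝ)
    (hYobs : Yobs = fun ω => W ω * Y1 ω + (1 - W ω) * Y0 ω)
    (hSobs : Sobs = fun ω => W ω * S1 ω + (1 - W ω) * S0 ω)
    (mX : MeasurableSpace Ω)
    (hmXdef : mX = MeasurableSpace.comap X inferInstance)
    (hmX : mX ≤ m0)
    (mSX : MeasurableSpace Ω)
    (hmSXdef : mSX = MeasurableSpace.comap (fun ω => (Sobs ω, X ω)) inferInstance)
    (hmSX : mSX ≤ m0)
    (hunconf : CondIndepFun mX hmX W (fun ω => (Y0 ω, Y1 ω, S0 ω, S1 ω)) μ)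
    (hρX : ∀ᵐ ω ∂μ, 0 < (μ[W | mX]) ω ∧ (μ[W | mX]) ω < 1)
    (hρSX : ∀ᵐ ω ∂μ, 0 < (μ[W | mSX]) ω ∧ (μ[W | mSX]) ω < 1) :
    (∫ ω, Y1 ω ∂μ)
        = (∫ ω, (μ[fun ω' => Yobs ω' * W ω' | mSX]) ω / (μ[W | mX]) ω ∂μ) ∧
      (∫ ω, (μ[fun ω' => Yobs ω' * W ω' | mSX]) ω / (μ[W | mX]) ω ∂μ)
        = ∫ ω, ((μ[W | mSX]) ω / (μ[W | mX]) ω)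
            * ((μ[fun ω' => Yobs ω' * W ω' | mSX]) ω / (μ[W | mSX]) ω) ∂μ := by
  haveI : SigmaFinite (μ.trim hmX) := by
    have : IsFiniteMeasure (μ.trim hmX) := isFiniteMeasure_trim hmX
    infer_instance
  haveI : SigmaFinite (μ.trim hmSX) := by
    have : IsFiniteMeasure (μ.trim hmSX) := isFiniteMeasure_trim hmSX
    infer_instance
  have hWnn : ∀ ω, 0 ≤ W ω := fun ω => by rcases hW01 ω with h | h <;> simp [h]
  set A : Set Ω := W ⁻¹' {1} with hAdef
  have hA : MeasurableSet[m0] A := hWm (measurableSet_singleton 1)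
  have hWind : W = A.indicator (fun _ => (1:ℝ)) := by
    funext ω
    rcases hW01 ω with h | h <;>
      simp [Set.indicator_apply, hAdef, Set.mem_preimage, h]
  set Z : Ω → ℝ × ℝ × ℝ × ℝ := fun ω => (Y0 ω, Y1 ω, S0 ω, S1 ω) with hZdef
  have hZ : Measurable[m0] Z := hY0.prodMk (hY1.prodMk (hS0.prodMk hS1))
  set mZ : MeasurableSpace Ω := MeasurableSpace.comap Z inferInstance with hmZdef
  have hmZ : mZ ≤ m0 := hZ.comap_le
  have hZmZ : Measurable[mZ] Z := measurable_iff_comap_le.mpr hmZdef.ge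
  have hY1mZ : Measurable[mZ] Y1 := (measurable_fst.comp measurable_snd).comp hZmZ
  have habsY1mZ : Measurable[mZ] (fun ω => |Y1 ω|) := hY1mZ.abs
  -- factorization from conditional independence
  have hfactsets := (condIndepFun_iff_condExp_inter_preimage_eq_mul hWm hZ).mp hunconf
  have hfact : ∀ B : Set Ω, MeasurableSet[mZ] B →
      (μ[(A ∩ B).indicator (fun _ => (1:ℝ)) | mX]) =ᵐ[μ]
        fun ω => (μ[A.indicator (fun _ => (1:ℝ)) | mX]) ω
          * (μ[B.indicator (fun _ => (1:ℝ)) | mX]) ω := by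
    rintro B ⟨t, ht, rfl⟩
    exact hfactsets {1} t (measurableSet_singleton 1) ht
  -- specialized product rule
  have prodRule : ∀ {g : Ω → ℝ}, Measurable[mZ] g → Integrable g μ →
      μ[fun ω => W ω * g ω | mX] =ᵐ[μ] fun ω => (μ[W | mX]) ω * (μ[g | mX]) ω := by
    intro g hgm hgint
    have h := condexp_indicator_mul_of_fact hmX hmZ hA hfact hgm.stronglyMeasurable hgint
    rw [hWind]
    exact h
  -- basic integrability
  have hρXm : Measurable[mX] (μ[W | mX]) := stronglyMeasurable_condExp.measurable
  have hρXm0 : Measurable[m0] (μ[W | mX]) := hρXm.mono hmX le_rfl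
  have hWY1 : Integrable (fun ω => W ω * Y1 ω) μ := by
    refine hY1int.norm.mono' ((hWm.mul hY1).aestronglyMeasurable) ?_
    filter_upwards with ω
    rw [Real.norm_eq_abs, Real.norm_eq_abs, abs_mul]
    refine mul_le_of_le_one_left (abs_nonneg _) ?_
    rcases hW01 ω with h | h <;> simp [h]
  have habsY1m0 : Measurable[m0] (fun ω => |Y1 ω|) := measurable_abs.comp hY1
  have hWabsY1 : Integrable (fun ω => W ω * |Y1 ω|) μ := by
    refine hY1int.norm.mono' ((hWm.mul habsY1m0).aestronglyMeasurable) ?_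
    filter_upwards with ω
    rw [Real.norm_eq_abs, Real.norm_eq_abs, abs_mul, abs_abs]
    refine mul_le_of_le_one_left (abs_nonneg _) ?_
    rcases hW01 ω with h | h <;> simp [h]
  -- finiteness of the weighted integral
  have habs_nonneg : 0 ≤ᵐ[μ] fun ω => W ω * |Y1 ω| :=
    Filter.Eventually.of_forall fun ω => mul_nonneg (hWnn ω) (abs_nonneg _)
  have hhinv : Measurable[mX] (fun ω => (ENNReal.ofReal ((μ[W | mX]) ω))⁻¹) :=
    hρXm.ennreal_ofReal.inv
  have hBabs := lintegral_ofReal_condexp_mul hmX μ hWabsY1 habs_nonneg hhinv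
  have hprod_abs := prodRule habsY1mZ hY1int.abs
  have hkey1 : ∫⁻ ω, ENNReal.ofReal (W ω * |Y1 ω|)
        * (ENNReal.ofReal ((μ[W | mX]) ω))⁻¹ ∂μ
      = ENNReal.ofReal (∫ ω, (μ[fun ω => |Y1 ω| | mX]) ω ∂μ) := by
    rw [← hBabs]
    have hcong : (fun ω => ENNReal.ofReal ((μ[fun ω => W ω * |Y1 ω| | mX]) ω)
          * (ENNReal.ofReal ((μ[W | mX]) ω))⁻¹)
        =ᵐ[μ] fun ω => ENNReal.ofReal ((μ[fun ω => |Y1 ω| | mX]) ω) := by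
      filter_upwards [hprod_abs, hρX] with ω h1 h2
      rw [h1, ENNReal.ofReal_mul h2.1.le, mul_comm (ENNReal.ofReal ((μ[W | mX]) ω)) _,
        mul_assoc, ENNReal.mul_inv_cancel (ENNReal.ofReal_pos.mpr h2.1).ne'
          ENNReal.ofReal_ne_top, mul_one]
    rw [lintegral_congr_ae hcong,
      ← ofReal_integral_eq_lintegral_ofReal integrable_condExp
        (condExp_nonneg (Filter.Eventually.of_forall fun ω => abs_nonneg _))]
  have hfin : ∫⁻ ω, ENNReal.ofReal (W ω * |Y1 ω|)
      * (ENNReal.ofReal ((μ[W | mX]) ω))⁻¹ ∂μ < ⊤ := by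
    rw [hkey1]; exact ENNReal.ofReal_lt_top
  -- integrability of the IPW integrand
  set q : Ω → ℝ := fun ω => W ω * Y1 ω / (μ[W | mX]) ω with hqdef
  have hq_aesm : AEStronglyMeasurable[m0] q μ := ((hWm.mul hY1).div hρXm0).aestronglyMeasurable
  have hqint : Integrable q μ := by
    refine ⟨hq_aesm, ?_⟩
    rw [hasFiniteIntegral_iff_norm]
    have hcong : (fun ω => ENNReal.ofReal ‖q ω‖)
        =ᵐ[μ] fun ω => ENNReal.ofReal (W ω * |Y1 ω|)
          * (ENNReal.ofReal ((μ[W | mX]) ω))⁻¹ := by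
      filter_upwards [hρX] with ω h2
      simp only [hqdef]
      rw [Real.norm_eq_abs, abs_div, abs_mul, abs_of_nonneg (hWnn ω), abs_of_pos h2.1,
        ENNReal.ofReal_div_of_pos h2.1, div_eq_mul_inv]
    rw [lintegral_congr_ae hcong]
    exact hfin
  -- Yobs * W = W * Y1
  have hYW : (fun ω' => Yobs ω' * W ω') = fun ω => W ω * Y1 ω := by
    funext ω
    rcases hW01 ω with h | h <;> simp [hYobs, h] <;> ring
  -- mX ≤ mSX
  have hmXSX : mX ≤ mSX := by
    rw [hmXdef, hmSXdef]
    rintro s ⟨t, ht, rfl⟩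
    refine ⟨Set.univ ×ˢ t, MeasurableSet.univ.prod ht, ?_⟩
    ext ω
    simp
  -- pull-out at mSX and mX
  have hρXinv_smX : StronglyMeasurable[mX] (fun ω => ((μ[W | mX]) ω)⁻¹) :=
    hρXm.inv.stronglyMeasurable
  have hρXinv_smSX : StronglyMeasurable[mSX] (fun ω => ((μ[W | mX]) ω)⁻¹) :=
    ((stronglyMeasurable_condExp.mono hmXSX).measurable.inv).stronglyMeasurable
  have hfgq : Integrable ((fun ω => ((μ[W | mX]) ω)⁻¹) * (fun ω => W ω * Y1 ω)) μ := by
    have heq : ((fun ω => ((μ[W | mX]) ω)⁻¹) * (fun ω => W ω * Y1 ω)) = q := by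
      funext ω
      simp only [Pi.mul_apply, hqdef]
      rw [div_eq_mul_inv]; ring
    rw [heq]; exact hqint
  have hpullSX := condExp_mul_of_stronglyMeasurable_left (μ := μ) (m := mSX) hρXinv_smSX hfgq hWY1
  have hpullX := condExp_mul_of_stronglyMeasurable_left (μ := μ) (m := mX) hρXinv_smX hfgq hWY1
  have hq_fun : q = (fun ω => ((μ[W | mX]) ω)⁻¹) * (fun ω => W ω * Y1 ω) := by
    funext ω
    simp only [Pi.mul_apply, hqdef]
    rw [div_eq_mul_inv]; ring
  have hq_exp : μ[q | mSX] = μ[(fun ω => ((μ[W | mX]) ω)⁻¹) * (fun ω => W ω * Y1 ω) | mSX] := by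
    rw [hq_fun]
  have hq_expX : μ[q | mX] = μ[(fun ω => ((μ[W | mX]) ω)⁻¹) * (fun ω => W ω * Y1 ω) | mX] := by
    rw [hq_fun]
  have hdiv1 : (fun ω => (μ[fun ω => W ω * Y1 ω | mSX]) ω / (μ[W | mX]) ω)
      =ᵐ[μ] μ[q | mSX] := by
    rw [hq_exp]
    filter_upwards [hpullSX] with ω hω
    rw [hω]
    simp only [Pi.mul_apply]
    rw [div_eq_mul_inv, mul_comm]
  have hprodY1 := prodRule hY1mZ hY1int
  have hqmX : μ[q | mX] =ᵐ[μ] μ[Y1 | mX] := by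
    rw [hq_expX]
    filter_upwards [hpullX, hprodY1, hρX] with ω h1 h2 h3
    rw [h1]
    simp only [Pi.mul_apply]
    rw [h2, inv_mul_cancel_left₀ h3.1.ne']
  constructor
  · rw [hYW]
    calc ∫ ω, Y1 ω ∂μ
        = ∫ ω, (μ[Y1 | mX]) ω ∂μ := (integral_condExp hmX).symm
      _ = ∫ ω, (μ[q | mX]) ω ∂μ := (integral_congr_ae hqmX).symm
      _ = ∫ ω, q ω ∂μ := integral_condExp hmX
      _ = ∫ ω, (μ[q | mSX]) ω ∂μ := (integral_condExp hmSX).symm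
      _ = ∫ ω, (μ[fun ω => W ω * Y1 ω | mSX]) ω / (μ[W | mX]) ω ∂μ :=
          (integral_congr_ae hdiv1).symm
  · refine integral_congr_ae ?_
    filter_upwards [hρSX] with ω h
    rw [div_mul_div_comm, mul_comm ((μ[W | mX]) ω) ((μ[W | mSX]) ω),
      mul_div_mul_left _ _ h.1.ne']
end
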